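/- Let f₁, f₂ be admissible functions and let Φ : ℓ² → ℓ² be a bijective linear map which restricts to a bijection ℓ²_{f₁} → ℓ²_{f₂}, and let c > 0 be a constant such that ‖Φx‖_{ℓ²} ≤ c·‖x‖_{ℓ²} and ‖Φ⁻¹x‖_{ℓ²} ≤ c·‖x‖_{ℓ²} for all x ∈ ℓ², and ‖Φx‖_{ℓ²_{f₂}} ≤ c·‖x‖_{ℓ²_{f₁}} for all x ∈ ℓ²_{f₁} and ‖Φ⁻¹x‖_{ℓ²_{f₁}} ≤ c·‖x‖_{ℓ²_{f₂}} for all x ∈ ℓ²_{f₂}. Then f₂(n) ≤ c⁴·f₁(n) for all n. -/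

import Mathlib

noncomputable section

/-- `f` is admissible: positive, monotone nondecreasing, and unbounded. -/
def Admissible (f : ℕ → ℝ) : Prop :=
  (∀ n, 0 < f n) ∧ Monotone f ∧ ¬ BddAbove (Set.range f)

/-- Membership in the weighted space `ℓ²_f`: `∑ f n * x n ^ 2 < ∞`. -/
def MemW (f : ℕ → ℝ) (x : ℕ → ℝ) : Prop :=
  Summable fun n => f n * x n ^ 2

/-- The `ℓ²_f` norm of a sequence, `(∑ f n * x n ^ 2)^(1/2)`. -/
noncomputable def wNorm (f : ℕ → ℝ) (x : ℕ → ℝ) : ℝ :=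
  Real.sqrt (∑' n, f n * x n ^ 2)

/-- Equivalence of positive weight functions: `(1/c) f₁ ≤ f₂ ≤ c f₁`. -/
def FEquiv (f₁ f₂ : ℕ → ℝ) : Prop :=
  ∃ c : ℝ, 0 < c ∧ ∀ n, (1 / c) * f₁ n ≤ f₂ n ∧ f₂ n ≤ c * f₁ n

/-- The Hilbert space `ℓ²` of square-summable real sequences. -/
abbrev L2 := lp (fun _ : ℕ => ℝ) 2

namespace WeightAux

lemma single_add (i : ℕ) (a b : ℝ) :
    lp.single (E := fun _ : ℕ => ℝ) 2 i (a + b) =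
      lp.single 2 i a + lp.single 2 i b := by
  ext k
  by_cases h : k = i
  · subst h; simp [lp.single_apply_self, lp.coeFn_add]
  · simp [lp.single_apply_ne _ _ _ h, lp.coeFn_add]

/-- The embedding of `Fin (n+1) → ℝ` into `ℓ²` supported on `{0, …, n}`. -/
def Emap (n : ℕ) : (Fin (n + 1) → ℝ) →ₗ[ℝ] L2 where
  toFun a := ∑ j : Fin (n + 1), lp.single 2 (j : ℕ) (a j)
  map_add' a b := by
    rw [← Finset.sum_add_distrib]
    exact Finset.sum_congr rfl fun j _ => single_add _ _ _
  map_smul' r a := by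
    simp only [RingHom.id_apply]
    rw [Finset.smul_sum]
    refine Finset.sum_congr rfl fun j _ => ?_
    have : (r • a) j = r • a j := rfl
    rw [this, lp.single_smul]

lemma Emap_apply (n : ℕ) (a : Fin (n + 1) → ℝ) (k : ℕ) :
    (Emap n a : ℕ → ℝ) k = if h : k < n + 1 then a ⟨k, h⟩ else 0 := by
  have : (Emap n a : ℕ → ℝ) k = ∑ j : Fin (n + 1), (lp.single 2 (j : ℕ) (a j) : ℕ → ℝ) k := by
    rw [Emap]
    simp only [LinearMap.coe_mk, AddHom.coe_mk]
    rw [lp.coeFn_sum, Finset.sum_apply]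
  rw [this]
  by_cases h : k < n + 1
  · rw [dif_pos h]
    rw [Finset.sum_eq_single (⟨k, h⟩ : Fin (n + 1))]
    · exact lp.single_apply_self _ _ _
    · intro j _ hj
      refine lp.single_apply_ne _ _ _ fun hk => hj ?_
      exact Fin.ext hk.symm
    · simp
  · rw [dif_neg h]
    refine Finset.sum_eq_zero fun j _ => ?_
    refine lp.single_apply_ne _ _ _ fun hk => h ?_
    rw [hk]; exact j.isLt

/-- Evaluation at the first `n` coordinates. -/
def evalMap (n : ℕ) : L2 →ₗ[ℝ] (Fin n → ℝ) where
  toFun y := fun i => y (i : ℕ)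
  map_add' x y := by funext i; simp [lp.coeFn_add]
  map_smul' r x := by funext i; simp [lp.coeFn_smul]

lemma norm_sq_eq (y : L2) : ‖y‖ ^ 2 = ∑' k, (y k) ^ 2 := by
  rw [← real_inner_self_eq_norm_sq, lp.inner_eq_tsum]
  simp [RCLike.inner_apply, sq]

lemma summable_sq (y : L2) : Summable fun k => (y k) ^ 2 := by
  have h := lp.memℓp y
  rw [memℓp_gen_iff (p := 2) (by norm_num)] at h
  simpa [Real.norm_eq_abs, Real.rpow_natCast, sq_abs] using h

end WeightAux

open WeightAux in
/-- If `Φ : ℓ² → ℓ²` is a bijective linear map restricting to a bijection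
`ℓ²_{f₁} → ℓ²_{f₂}`, with `Φ, Φ⁻¹` bounded by `c` on the `ℓ²` level and on the
weighted level, then `f₂(n) ≤ c⁴ · f₁(n)` for all `n`. -/
theorem weight_bound_of_scale_iso (f₁ f₂ : ℕ → ℝ)
    (h₁ : Admissible f₁) (h₂ : Admissible f₂)
    (Φ : L2 ≃ₗ[ℝ] L2)
    (hres : Set.BijOn Φ {x : L2 | MemW f₁ x} {x : L2 | MemW f₂ x})
    (c : ℝ) (hc : 0 < c)
    (h0 : ∀ x : L2, ‖Φ x‖ ≤ c * ‖x‖)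
    (h0' : ∀ x : L2, ‖Φ.symm x‖ ≤ c * ‖x‖)
    (h1 : ∀ x : L2, MemW f₁ x → wNorm f₂ (Φ x) ≤ c * wNorm f₁ x)
    (h1' : ∀ x : L2, MemW f₂ x → wNorm f₁ (Φ.symm x) ≤ c * wNorm f₂ x) :
    ∀ n, f₂ n ≤ c ^ 4 * f₁ n := by
  intro n
  -- Find a nonzero vector supported on {0,…,n} whose image vanishes on {0,…,n-1}.
  set T : (Fin (n + 1) → ℝ) →ₗ[ℝ] (Fin n → ℝ) :=
    (evalMap n) ∘ₗ (Φ.toLinearMap ∘ₗ Emap n) with hT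
  have hTnoninj : ¬ Function.Injective T := by
    intro hinj
    have := LinearMap.finrank_le_finrank_of_injective hinj
    rw [Module.finrank_fin_fun, Module.finrank_fin_fun] at this
    omega
  obtain ⟨a, b, hab, hne⟩ := Function.not_injective_iff.1 hTnoninj
  set d : Fin (n + 1) → ℝ := a - b with hd
  have hd0 : d ≠ 0 := sub_ne_zero.2 hne
  have hTd : T d = 0 := by rw [hd, map_sub, hab, sub_self]
  set x : L2 := Emap n d with hx
  set y : L2 := Φ x with hy
  -- coordinates
  have hxk : ∀ k : ℕ, (x : ℕ → ℝ) k = if h : k < n + 1 then d ⟨k, h⟩ else 0 :=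
    Emap_apply n d
  have hyk0 : ∀ k, k < n → (y : ℕ → ℝ) k = 0 := by
    intro k hk
    have : evalMap n (Φ (Emap n d)) = 0 := hTd
    have := congrFun this ⟨k, hk⟩
    exact this
  have hxne : x ≠ 0 := by
    intro hx0
    apply hd0
    funext j
    have := hxk (j : ℕ)
    rw [hx0] at this
    simp only [lp.coeFn_zero, Pi.zero_apply] at this
    have hj : (j : ℕ) < n + 1 := j.isLt
    rw [dif_pos hj] at this
    simpa using this.symm
  have hxpos : 0 < ‖x‖ := norm_pos_iff.2 hxne
  have hyne : y ≠ 0 := by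
    intro hy0
    apply hxne
    have := congrArg Φ.symm hy0
    simpa [hy] using this
  have hypos : 0 < ‖y‖ := norm_pos_iff.2 hyne
  -- membership
  have hxmem : MemW f₁ x := by
    refine summable_of_ne_finset_zero (s := Finset.range (n + 1)) fun k hk => ?_
    have hk' : ¬ k < n + 1 := by simpa using hk
    rw [hxk k, dif_neg hk']
    ring
  have hymem : MemW f₂ y := hres.mapsTo hxmem
  -- nonnegativity of tsums
  have hnn₁ : (0:ℝ) ≤ ∑' k, f₁ k * (x : ℕ → ℝ) k ^ 2 :=
    tsum_nonneg fun k => mul_nonneg (h₁.1 k).le (sq_nonneg _)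
  have hnn₂ : (0:ℝ) ≤ ∑' k, f₂ k * (y : ℕ → ℝ) k ^ 2 :=
    tsum_nonneg fun k => mul_nonneg (h₂.1 k).le (sq_nonneg _)
  have hw₁sq : wNorm f₁ x ^ 2 = ∑' k, f₁ k * (x : ℕ → ℝ) k ^ 2 := Real.sq_sqrt hnn₁
  have hw₂sq : wNorm f₂ y ^ 2 = ∑' k, f₂ k * (y : ℕ → ℝ) k ^ 2 := Real.sq_sqrt hnn₂
  -- Step B : f₂ n * ‖y‖² ≤ wNorm f₂ y ²
  have stepB : f₂ n * ‖y‖ ^ 2 ≤ wNorm f₂ y ^ 2 := by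
    rw [hw₂sq, norm_sq_eq, ← tsum_mul_left]
    refine Summable.tsum_le_tsum (fun k => ?_) ((summable_sq y).mul_left _) hymem
    rcases lt_or_ge k n with hk | hk
    · rw [hyk0 k hk]; simp
    · exact mul_le_mul_of_nonneg_right (h₂.2.1 hk) (sq_nonneg _)
  -- Step C : wNorm f₂ y ² ≤ c² wNorm f₁ x ²
  have stepC : wNorm f₂ y ^ 2 ≤ c ^ 2 * wNorm f₁ x ^ 2 := by
    calc wNorm f₂ y ^ 2 ≤ (c * wNorm f₁ x) ^ 2 :=
          pow_le_pow_left₀ (Real.sqrt_nonneg _) (h1 x hxmem) 2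
      _ = c ^ 2 * wNorm f₁ x ^ 2 := by ring
  -- Step A : wNorm f₁ x ² ≤ f₁ n * ‖x‖²
  have stepA : wNorm f₁ x ^ 2 ≤ f₁ n * ‖x‖ ^ 2 := by
    rw [hw₁sq, norm_sq_eq, ← tsum_mul_left]
    refine Summable.tsum_le_tsum (fun k => ?_) hxmem ((summable_sq x).mul_left _)
    rcases le_or_gt k n with hk | hk
    · exact mul_le_mul_of_nonneg_right (h₁.2.1 hk) (sq_nonneg _)
    · have : ¬ k < n + 1 := by omega
      rw [hxk k, dif_neg this]
      simp
  -- Step D : ‖x‖² ≤ c² ‖y‖²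
  have stepD : ‖x‖ ^ 2 ≤ c ^ 2 * ‖y‖ ^ 2 := by
    have hxy : ‖x‖ ≤ c * ‖y‖ := by
      have := h0' y
      rwa [hy, LinearEquiv.symm_apply_apply] at this
    calc ‖x‖ ^ 2 ≤ (c * ‖y‖) ^ 2 := pow_le_pow_left₀ (norm_nonneg _) hxy 2
      _ = c ^ 2 * ‖y‖ ^ 2 := by ring
  -- Combine
  have key : f₂ n * ‖y‖ ^ 2 ≤ c ^ 4 * f₁ n * ‖y‖ ^ 2 := by
    calc f₂ n * ‖y‖ ^ 2 ≤ wNorm f₂ y ^ 2 := stepB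
      _ ≤ c ^ 2 * wNorm f₁ x ^ 2 := stepC
      _ ≤ c ^ 2 * (f₁ n * ‖x‖ ^ 2) := by
          exact mul_le_mul_of_nonneg_left stepA (sq_nonneg c)
      _ ≤ c ^ 2 * (f₁ n * (c ^ 2 * ‖y‖ ^ 2)) := by
          refine mul_le_mul_of_nonneg_left ?_ (sq_nonneg c)
          exact mul_le_mul_of_nonneg_left stepD (h₁.1 n).le
      _ = c ^ 4 * f₁ n * ‖y‖ ^ 2 := by ring
  have hy2 : 0 < ‖y‖ ^ 2 := by positivity
  exact le_of_mul_le_mul_right key hy2
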